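/- Let ĉ, m, m_n, p₀, c₀ be reals with ĉ > 0 and 0 < m ≤ m_n. For k > ĉ define P̂(k) = m·p₀ − m·c₀ − 2m_n·ĉ + k·ĉ·(2m_n − m)²/(4m(k − ĉ)) if m_n/m ≤ (k − ĉ)/k + 1/2, and P̂(k) = m·p₀ − m·c₀ − 2m·ĉ + m·ĉ²/k otherwise. Then P̂ is antitone (nonincreasing) on (ĉ, ∞); in particular it is nonincreasing on [2ĉ, ∞). -/

import Mathlib

/-- Last assertion of Lemma V.1: the super-optimal profit `P̂(k)` collected
from a customer type is nonincreasing in the elasticity cost coefficient `k`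
on `(ĉ, ∞)`, in particular on `[2ĉ, ∞)`. -/
theorem superoptimal_profit_antitone (c m mn p₀ c₀ : ℝ) (hc : 0 < c)
    (hm : 0 < m) (hmn : m ≤ mn) :
    AntitoneOn (fun k : ℝ =>
        if mn / m ≤ (k - c) / k + 1 / 2 then
          m * p₀ - m * c₀ - 2 * mn * c + k * c * (2 * mn - m) ^ 2 / (4 * m * (k - c))
        else
          m * p₀ - m * c₀ - 2 * m * c + m * c ^ 2 / k)
      (Set.Ioi c) ∧
    AntitoneOn (fun k : ℝ =>
        if mn / m ≤ (k - c) / k + 1 / 2 then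
          m * p₀ - m * c₀ - 2 * mn * c + k * c * (2 * mn - m) ^ 2 / (4 * m * (k - c))
        else
          m * p₀ - m * c₀ - 2 * m * c + m * c ^ 2 / k)
      (Set.Ici (2 * c)) := by
  -- abbreviations for the two branches
  set f₁ : ℝ → ℝ := fun k =>
    m * p₀ - m * c₀ - 2 * mn * c + k * c * (2 * mn - m) ^ 2 / (4 * m * (k - c)) with hf₁def
  set f₂ : ℝ → ℝ := fun k =>
    m * p₀ - m * c₀ - 2 * m * c + m * c ^ 2 / k with hf₂def
  -- the condition rewritten without divisions
  have key : ∀ k : ℝ, 0 < k →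
      ((mn / m ≤ (k - c) / k + 1 / 2) ↔ 2 * mn * k ≤ (3 * k - 2 * c) * m) := by
    intro k hk
    have h : (k - c) / k + 1 / 2 = (2 * (k - c) + k) / (2 * k) := by
      field_simp
    rw [h, div_le_div_iff₀ hm (by positivity)]
    constructor <;> intro h' <;> nlinarith [h']
  -- f₁ is antitone on (c, ∞)
  have hf1 : ∀ x y : ℝ, c < x → x ≤ y → f₁ y ≤ f₁ x := by
    intro x y hx hxy
    have hx0 : 0 < 4 * m * (x - c) := by nlinarith [mul_pos hm (sub_pos.2 hx)]
    have hy0 : 0 < 4 * m * (y - c) := by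
      nlinarith [mul_pos hm (sub_pos.2 (hx.trans_le hxy))]
    have : y * c * (2 * mn - m) ^ 2 / (4 * m * (y - c)) ≤
        x * c * (2 * mn - m) ^ 2 / (4 * m * (x - c)) := by
      rw [div_le_div_iff₀ hy0 hx0]
      nlinarith [mul_nonneg (mul_nonneg (mul_nonneg (mul_nonneg hm.le hc.le) hc.le)
        (sq_nonneg (2 * mn - m))) (sub_nonneg.2 hxy)]
    simp only [hf₁def]
    linarith
  -- f₂ is antitone on (0, ∞)
  have hf2 : ∀ x y : ℝ, 0 < x → x ≤ y → f₂ y ≤ f₂ x := by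
    intro x y hx hxy
    have : m * c ^ 2 / y ≤ m * c ^ 2 / x :=
      div_le_div_of_nonneg_left (by positivity) hx hxy
    simp only [hf₂def]
    linarith
  have main : AntitoneOn (fun k : ℝ =>
      if mn / m ≤ (k - c) / k + 1 / 2 then f₁ k else f₂ k) (Set.Ioi c) := by
    intro a ha b hb hab
    have ha' : c < a := ha
    have hb' : c < b := hb
    have ha0 : 0 < a := hc.trans ha'
    have hb0 : 0 < b := hc.trans hb'
    by_cases h1 : mn / m ≤ (a - c) / a + 1 / 2
    · -- condition holds at a, hence at b
      have h1' : 2 * mn * a ≤ (3 * a - 2 * c) * m := (key a ha0).1 h1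
      have h3m : 0 < 3 * m - 2 * mn := by nlinarith [mul_pos hc hm]
      have h2' : 2 * mn * b ≤ (3 * b - 2 * c) * m := by nlinarith
      have h2 : mn / m ≤ (b - c) / b + 1 / 2 := (key b hb0).2 h2'
      simp only [if_pos h1, if_pos h2]
      exact hf1 a b ha' hab
    · by_cases h2 : mn / m ≤ (b - c) / b + 1 / 2
      · -- mixed case: branch 2 at a, branch 1 at b
        have h1' : ¬ (2 * mn * a ≤ (3 * a - 2 * c) * m) := fun h => h1 ((key a ha0).2 h)
        push_neg at h1'
        have h2' : 2 * mn * b ≤ (3 * b - 2 * c) * m := (key b hb0).1 h2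
        have h3m : 0 < 3 * m - 2 * mn := by nlinarith [mul_pos hc hm]
        set K : ℝ := 2 * m * c / (3 * m - 2 * mn) with hKdef
        have hKc : c < K := by
          rw [hKdef, lt_div_iff₀ h3m]; nlinarith [mul_pos hc hm]
        have hK0 : 0 < K := hc.trans hKc
        have haK : a ≤ K := by
          rw [hKdef, le_div_iff₀ h3m]; nlinarith
        have hKb : K ≤ b := by
          rw [hKdef, div_le_iff₀ h3m]; nlinarith
        have hrel : 2 * mn * K = (3 * K - 2 * c) * m := by
          have e : K * (3 * m - 2 * mn) = 2 * m * c := by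
            rw [hKdef]; exact div_mul_cancel₀ _ h3m.ne'
          linear_combination (-1 : ℝ) * e
        have heq : f₂ K = f₁ K := by
          simp only [hf₁def, hf₂def]
          have hK0' : K ≠ 0 := ne_of_gt hK0
          have hKc' : K - c ≠ 0 := ne_of_gt (sub_pos.2 hKc)
          have hm' : m ≠ 0 := ne_of_gt hm
          field_simp
          linear_combination (-2 * c * K * mn + 3 * m * c * K - 2 * m * c ^ 2) * hrel
        simp only [if_neg h1, if_pos h2]
        calc f₁ b ≤ f₁ K := hf1 K b hKc hKb
          _ = f₂ K := heq.symm
          _ ≤ f₂ a := hf2 a K ha0 haK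
      · simp only [if_neg h1, if_neg h2]
        exact hf2 a b ha0 hab
  exact ⟨main, main.mono fun x hx => Set.mem_Ioi.2 (by
    have : 2 * c ≤ x := hx
    linarith)⟩
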